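/- If f ∈ K[x₁,...,xₙ] is square-free, then for every point P ∈ Kⁿ, the multiplicity of f at P (the largest q such that f lies in the q-th power of the maximal ideal at P) is at most n. -/

import Mathlib

open MvPolynomial

def MvSquareFree {K : Type*} [CommSemiring K] {n : ℕ} (f : MvPolynomial (Fin n) K) : Prop :=
  ∀ i : Fin n, f.degreeOf i ≤ 1

/-- The maximal ideal of polynomials vanishing at the point `P`. -/
noncomputable def pointIdeal {K : Type*} [CommRing K] {n : ℕ} (P : Fin n → K) :
    Ideal (MvPolynomial (Fin n) K) :=
  Ideal.span (Set.range fun i : Fin n => X i - C (P i))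

/-- Elements of the `q`-th power of the irrelevant ideal have all monomials of degree `≥ q`. -/
lemma aux_mem_pow_span_X {K : Type*} [CommRing K] {n : ℕ} (q : ℕ)
    (f : MvPolynomial (Fin n) K)
    (hf : f ∈ (Ideal.span (Set.range (X : Fin n → MvPolynomial (Fin n) K))) ^ q) :
    ∀ d ∈ f.support, q ≤ d.sum fun _ k => k := by
  induction q generalizing f with
  | zero => intro d _; exact Nat.zero_le _
  | succ q ih =>
    rw [pow_succ] at hf
    refine Submodule.mul_induction_on hf ?_ ?_
    · intro a ha b hb d hd
      classical
      have hsub := MvPolynomial.support_mul a b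
      obtain ⟨da, hda, db, hdb, rfl⟩ := Finset.mem_add.mp (hsub hd)
      have h1 : q ≤ da.sum fun _ k => k := ih a ha da hda
      have hb' : b ∈ Ideal.span ((X : Fin n → MvPolynomial (Fin n) K) '' Set.univ) := by
        rwa [Set.image_univ]
      have h2 : 1 ≤ db.sum fun _ k => k := by
        obtain ⟨i, _, hi⟩ := (MvPolynomial.mem_ideal_span_X_image.mp hb') db hdb
        calc 1 ≤ db i := Nat.one_le_iff_ne_zero.mpr hi
        _ ≤ db.sum fun _ k => k := by
              rw [Finsupp.sum]
              exact Finset.single_le_sum (fun _ _ => Nat.zero_le _)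
                (Finsupp.mem_support_iff.mpr hi)
      rw [Finsupp.sum_add_index (by intros; rfl) (by intros; rfl)]
      omega
    · intro x y hx hy d hd
      classical
      rcases Finset.mem_union.mp (MvPolynomial.support_add hd) with h | h
      · exact hx d h
      · exact hy d h

/-- `aeval` at polynomials of total degree `≤ 1` does not increase total degree. -/
lemma aux_totalDegree_aeval_le {K : Type*} [CommRing K] {n : ℕ}
    (g : Fin n → MvPolynomial (Fin n) K) (hg : ∀ i, (g i).totalDegree ≤ 1)
    (p : MvPolynomial (Fin n) K) :
    (aeval g p).totalDegree ≤ p.totalDegree := by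
  classical
  conv_lhs => rw [p.as_sum]
  rw [map_sum]
  refine MvPolynomial.totalDegree_finsetSum_le ?_
  intro d hd
  rw [aeval_monomial]
  refine le_trans (MvPolynomial.totalDegree_mul _ _) ?_
  have h1 : (algebraMap K (MvPolynomial (Fin n) K) (coeff d p)).totalDegree = 0 :=
    MvPolynomial.totalDegree_C _
  rw [h1, zero_add]
  have h2 : (d.prod fun i k => g i ^ k).totalDegree ≤ d.sum fun _ k => k := by
    rw [Finsupp.prod]
    refine le_trans (MvPolynomial.totalDegree_finset_prod _ _) ?_
    rw [Finsupp.sum]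
    refine Finset.sum_le_sum ?_
    intro i _
    calc (g i ^ d i).totalDegree ≤ d i * (g i).totalDegree :=
          MvPolynomial.totalDegree_pow _ _
      _ ≤ d i * 1 := Nat.mul_le_mul_left _ (hg i)
      _ = d i := Nat.mul_one _
  exact le_trans h2 (MvPolynomial.le_totalDegree hd)

/-- the multiplicity of a nonzero square-free polynomial at any point
is at most `n`. -/
theorem mult_le_n_of_squareFree {K : Type*} [Field K] [CharZero K] {n : ℕ}
    (f : MvPolynomial (Fin n) K) (hf0 : f ≠ 0) (hf : MvSquareFree f)
    (P : Fin n → K) (q : ℕ) (hq : f ∈ (pointIdeal P) ^ q) :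
    q ≤ n := by
  classical
  set T : MvPolynomial (Fin n) K →ₐ[K] MvPolynomial (Fin n) K :=
    aeval (fun i => X i + C (P i)) with hT
  set T' : MvPolynomial (Fin n) K →ₐ[K] MvPolynomial (Fin n) K :=
    aeval (fun i => X i - C (P i)) with hT'
  have hTT' : ∀ p, T' (T p) = p := by
    intro p
    have : T'.comp T = AlgHom.id K (MvPolynomial (Fin n) K) := by
      refine MvPolynomial.algHom_ext ?_
      intro i
      simp [hT, hT']
    calc T' (T p) = (T'.comp T) p := rfl
      _ = p := by rw [this]; rfl
  -- T maps pointIdeal P into the span of the X i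
  have hmap : Ideal.map (T : MvPolynomial (Fin n) K →+* MvPolynomial (Fin n) K)
      (pointIdeal P) ≤ Ideal.span (Set.range (X : Fin n → MvPolynomial (Fin n) K)) := by
    rw [pointIdeal, Ideal.map_span]
    refine Ideal.span_le.mpr ?_
    rintro _ ⟨_, ⟨i, rfl⟩, rfl⟩
    have : T (X i - C (P i)) = X i := by simp [hT]
    rw [RingHom.coe_coe, this]
    exact Ideal.subset_span ⟨i, rfl⟩
  have hTf : T f ∈ (Ideal.span (Set.range (X : Fin n → MvPolynomial (Fin n) K))) ^ q := by
    have h1 : T f ∈ Ideal.map (T : MvPolynomial (Fin n) K →+* MvPolynomial (Fin n) K)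
        ((pointIdeal P) ^ q) := Ideal.mem_map_of_mem _ hq
    rw [Ideal.map_pow] at h1
    exact Ideal.pow_right_mono hmap q h1
  have hTf0 : T f ≠ 0 := by
    intro h
    apply hf0
    have := hTT' f
    rw [h, map_zero] at this
    exact this.symm
  -- q ≤ totalDegree (T f)
  obtain ⟨d, hd⟩ := Finset.nonempty_iff_ne_empty.mpr
    (fun h => hTf0 (MvPolynomial.support_eq_empty.mp h))
  have hq1 : q ≤ (T f).totalDegree :=
    le_trans (aux_mem_pow_span_X q (T f) hTf d hd) (MvPolynomial.le_totalDegree hd)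
  -- totalDegree (T f) ≤ totalDegree f
  have hq2 : (T f).totalDegree ≤ f.totalDegree := by
    refine aux_totalDegree_aeval_le _ ?_ f
    intro i
    refine le_trans (MvPolynomial.totalDegree_add _ _) ?_
    simp [MvPolynomial.totalDegree_X, MvPolynomial.totalDegree_C]
  -- totalDegree f ≤ n
  have hq3 : f.totalDegree ≤ n := by
    rw [MvPolynomial.totalDegree]
    refine Finset.sup_le ?_
    intro e he
    calc (e.sum fun _ k => k) = ∑ i ∈ e.support, e i := rfl
      _ ≤ ∑ i : Fin n, e i := Finset.sum_le_sum_of_subset (Finset.subset_univ _)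
      _ ≤ ∑ _i : Fin n, 1 := Finset.sum_le_sum fun i _ =>
            le_trans (MvPolynomial.monomial_le_degreeOf i he) (hf i)
      _ = n := by simp
  omega
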